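/- Let n, m be positive integers. Let W := { (R^T L_m^{(1)} + Λ_n(0) S, R^T L_m^{(2)} + Δ_n S) : S ∈ ℂ^{n×(2m+1)}, R ∈ ℂ^{(2m+1)×n} } ⊆ ℂ^{n×(2m+1)} × ℂ^{n×(2m+1)}, and let P := { (X, 0) : X ∈ ℂ^{n×(2m+1)}, X_{ij} = 0 unless j = m+1 }. Then ℂ^{n×(2m+1)} × ℂ^{n×(2m+1)} = W ⊕ P. -/
import Mathlib


open Matrix

noncomputable section

/-- `Λ_n(λ)`: the `n × n` matrix with `(i,j)` entry `λ` if `i + j = n + 1`, `1` if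
`i + j = n + 2`, and `0` otherwise (1-based indices). -/
def lamM (n : ℕ) (lam : ℂ) : Matrix (Fin n) (Fin n) ℂ :=
  Matrix.of fun i j =>
    if (i : ℕ) + 1 + ((j : ℕ) + 1) = n + 1 then lam
    else if (i : ℕ) + 1 + ((j : ℕ) + 1) = n + 2 then 1 else 0

/-- `Δ_n`: the `n × n` matrix with `(i,j)` entry `1` if `i + j = n + 1` and `0`
otherwise (1-based indices). -/
def delM (n : ℕ) : Matrix (Fin n) (Fin n) ℂ :=
  Matrix.of fun i j => if (i : ℕ) + 1 + ((j : ℕ) + 1) = n + 1 then 1 else 0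

/-- `F_n`: the `n × (n+1)` matrix with `F_n(i,j) = 1` exactly when `j = i`. -/
def FM (n : ℕ) : Matrix (Fin n) (Fin (n + 1)) ℂ :=
  Matrix.of fun i j => if (j : ℕ) = (i : ℕ) then 1 else 0

/-- `G_n`: the `n × (n+1)` matrix with `G_n(i,j) = 1` exactly when `j = i + 1`. -/
def GM (n : ℕ) : Matrix (Fin n) (Fin (n + 1)) ℂ :=
  Matrix.of fun i j => if (j : ℕ) = (i : ℕ) + 1 then 1 else 0

/-- `L_n^{(1)} = [[0, F_nᵀ], [F_n, 0]]`, a symmetric `(2n+1) × (2n+1)` matrix. -/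
def L1M (n : ℕ) : Matrix (Fin (2 * n + 1)) (Fin (2 * n + 1)) ℂ :=
  Matrix.reindex (finSumFinEquiv.trans (finCongr (by omega)))
    (finSumFinEquiv.trans (finCongr (by omega)))
    (Matrix.fromBlocks 0 (FM n)ᵀ (FM n) 0)

/-- `L_n^{(2)} = [[0, G_nᵀ], [G_n, 0]]`, a symmetric `(2n+1) × (2n+1)` matrix. -/
def L2M (n : ℕ) : Matrix (Fin (2 * n + 1)) (Fin (2 * n + 1)) ℂ :=
  Matrix.reindex (finSumFinEquiv.trans (finCongr (by omega)))
    (finSumFinEquiv.trans (finCongr (by omega)))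
    (Matrix.fromBlocks 0 (GM n)ᵀ (GM n) 0)

theorem lamM_isSymm (n : ℕ) (lam : ℂ) : (lamM n lam).IsSymm := by
  unfold Matrix.IsSymm lamM
  ext i j
  simp only [Matrix.transpose_apply, Matrix.of_apply]
  split_ifs <;> first | rfl | omega

theorem delM_isSymm (n : ℕ) : (delM n).IsSymm := by
  unfold Matrix.IsSymm delM
  ext i j
  simp only [Matrix.transpose_apply, Matrix.of_apply]
  split_ifs <;> first | rfl | omega

theorem L1M_isSymm (n : ℕ) : (L1M n).IsSymm := by
  unfold Matrix.IsSymm L1M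
  rw [Matrix.transpose_reindex, Matrix.fromBlocks_transpose]
  simp

theorem L2M_isSymm (n : ℕ) : (L2M n).IsSymm := by
  unfold Matrix.IsSymm L2M
  rw [Matrix.transpose_reindex, Matrix.fromBlocks_transpose]
  simp

/-- The type of canonical summands: `H_k(λ)`, `K_k`, `L_k`. -/
inductive CanType where
  | H : ℕ → ℂ → CanType
  | K : ℕ → CanType
  | L : ℕ → CanType

/-- The size of a canonical pair. -/
def CanType.size : CanType → ℕ
  | .H k _ => k
  | .K k => k
  | .L k => 2 * k + 1

/-- The size parameter of a canonical pair. -/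
def CanType.param : CanType → ℕ
  | .H k _ => k
  | .K k => k
  | .L k => k

/-- The first matrix of a canonical pair. -/
def CanType.A : (c : CanType) → Matrix (Fin c.size) (Fin c.size) ℂ
  | .H k _ => delM k
  | .K k => lamM k 0
  | .L k => L1M k

/-- The second matrix of a canonical pair. -/
def CanType.B : (c : CanType) → Matrix (Fin c.size) (Fin c.size) ℂ
  | .H k lam => lamM k lam
  | .K k => delM k
  | .L k => L2M k

/-- Congruence of pairs of square complex matrices (over possibly different index
types): `(A', B') = (Sᵀ A S, Sᵀ B S)` for some invertible `S`. -/
def CongruentPairs {ι κ : Type} [Fintype ι] [Fintype κ] [DecidableEq ι] [DecidableEq κ]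
    (p : Matrix ι ι ℂ × Matrix ι ι ℂ) (q : Matrix κ κ ℂ × Matrix κ κ ℂ) : Prop :=
  ∃ S : Matrix ι κ ℂ, (∃ T : Matrix κ ι ℂ, S * T = 1 ∧ T * S = 1) ∧
    q.1 = Sᵀ * p.1 * S ∧ q.2 = Sᵀ * p.2 * S

/-- The linear map `(S, R) ↦ (Rᵀ A_j + A_i S, Rᵀ B_j + B_i S)`. -/
def offMap {ι κ : Type} [Fintype ι] [Fintype κ] (Ai Bi : Matrix ι ι ℂ)
    (Aj Bj : Matrix κ κ ℂ) :
    (Matrix ι κ ℂ × Matrix κ ι ℂ) →ₗ[ℂ] (Matrix ι κ ℂ × Matrix ι κ ℂ) where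
  toFun SR := (SR.2ᵀ * Aj + Ai * SR.1, SR.2ᵀ * Bj + Bi * SR.1)
  map_add' x y := by
    simp only [Prod.fst_add, Prod.snd_add, Matrix.transpose_add, Matrix.add_mul,
      Matrix.mul_add, Prod.mk_add_mk, Prod.ext_iff]
    constructor <;> abel
  map_smul' c x := by
    simp only [Prod.smul_fst, Prod.smul_snd, Matrix.transpose_smul, Matrix.smul_mul,
      Matrix.mul_smul, RingHom.id_apply, Prod.smul_mk, smul_add]

/-- `W = {(Rᵀ A_j + A_i S, Rᵀ B_j + B_i S) : S, R}`. -/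
def WSpace {ι κ : Type} [Fintype ι] [Fintype κ] (Ai Bi : Matrix ι ι ℂ)
    (Aj Bj : Matrix κ κ ℂ) : Submodule ℂ (Matrix ι κ ℂ × Matrix ι κ ℂ) :=
  LinearMap.range (offMap Ai Bi Aj Bj)

/-- The space of pairs of (rectangular) matrices supported on given sets of positions. -/
def entryPattern {ι κ : Type} (S1 S2 : Set (ι × κ)) :
    Submodule ℂ (Matrix ι κ ℂ × Matrix ι κ ℂ) where
  carrier := {x | (∀ i j, (i, j) ∉ S1 → x.1 i j = 0) ∧ (∀ i j, (i, j) ∉ S2 → x.2 i j = 0)}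
  add_mem' := by
    rintro a b ⟨ha1, ha2⟩ ⟨hb1, hb2⟩
    exact ⟨fun i j h => by show a.1 i j + b.1 i j = 0; rw [ha1 i j h, hb1 i j h, add_zero],
      fun i j h => by show a.2 i j + b.2 i j = 0; rw [ha2 i j h, hb2 i j h, add_zero]⟩
  zero_mem' := ⟨fun _ _ _ => rfl, fun _ _ _ => rfl⟩
  smul_mem' := by
    rintro c a ⟨ha1, ha2⟩
    exact ⟨fun i j h => by show c * a.1 i j = 0; rw [ha1 i j h, mul_zero],
      fun i j h => by show c * a.2 i j = 0; rw [ha2 i j h, mul_zero]⟩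


end

noncomputable section

lemma L1M_apply (m : ℕ) (k c : Fin (2 * m + 1)) :
    L1M m k c = if ((k:ℕ) + (m+1) = c ∨ (c:ℕ) + (m+1) = k) then 1 else 0 := by
  obtain ⟨k', hk⟩ := (finSumFinEquiv.trans (finCongr (show m+1+m = 2*m+1 by omega))).surjective k
  obtain ⟨c', hc⟩ := (finSumFinEquiv.trans (finCongr (show m+1+m = 2*m+1 by omega))).surjective c
  subst hk hc
  simp only [L1M, Matrix.reindex_apply, Matrix.submatrix_apply, Equiv.symm_apply_apply]
  rcases k' with a | a <;> rcases c' with b | b <;>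
    simp only [Matrix.fromBlocks_apply₁₁, Matrix.fromBlocks_apply₁₂, Matrix.fromBlocks_apply₂₁,
      Matrix.fromBlocks_apply₂₂, Matrix.zero_apply, Matrix.transpose_apply, FM, Matrix.of_apply,
      Equiv.trans_apply, finCongr_apply, Fin.coe_cast, finSumFinEquiv_apply_left,
      finSumFinEquiv_apply_right, Fin.coe_castAdd, Fin.coe_natAdd] <;>
    split_ifs <;> first | rfl | omega
lemma L2M_apply (m : ℕ) (k c : Fin (2 * m + 1)) :
    L2M m k c = if (((k:ℕ) + m = c ∧ 1 ≤ (k:ℕ)) ∨ ((c:ℕ) + m = k ∧ 1 ≤ (c:ℕ))) then 1 else 0 := by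
  obtain ⟨k', hk⟩ := (finSumFinEquiv.trans (finCongr (show m+1+m = 2*m+1 by omega))).surjective k
  obtain ⟨c', hc⟩ := (finSumFinEquiv.trans (finCongr (show m+1+m = 2*m+1 by omega))).surjective c
  subst hk hc
  simp only [L2M, Matrix.reindex_apply, Matrix.submatrix_apply, Equiv.symm_apply_apply]
  rcases k' with a | a <;> rcases c' with b | b <;>
    simp only [Matrix.fromBlocks_apply₁₁, Matrix.fromBlocks_apply₁₂, Matrix.fromBlocks_apply₂₁,
      Matrix.fromBlocks_apply₂₂, Matrix.zero_apply, Matrix.transpose_apply, GM, Matrix.of_apply,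
      Equiv.trans_apply, finCongr_apply, Fin.coe_cast, finSumFinEquiv_apply_left,
      finSumFinEquiv_apply_right, Fin.coe_castAdd, Fin.coe_natAdd] <;>
    split_ifs <;> first | rfl | omega

lemma sum_single_pred {N : ℕ} (P : Fin N → Prop) [DecidablePred P] (f : Fin N → ℂ) (k0 : Fin N)
    (h : ∀ k, P k ↔ k = k0) : (∑ k, if P k then f k else 0) = f k0 := by
  rw [Finset.sum_congr rfl (g := fun k => if k = k0 then f k else 0)
    (fun k _ => if_congr (h k) rfl rfl), Finset.sum_ite_eq']
  simp

lemma mul_L1_apply {n m : ℕ} (T : Matrix (Fin n) (Fin (2*m+1)) ℂ) (i : Fin n) (c : Fin (2*m+1)) :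
    (T * L1M m) i c =
      if h : (c:ℕ) < m then T i ⟨(c:ℕ) + (m+1), by omega⟩
      else if h2 : m < (c:ℕ) then T i ⟨(c:ℕ) - (m+1), by have := c.isLt; omega⟩
      else 0 := by
  rw [Matrix.mul_apply]
  simp only [L1M_apply, mul_ite, mul_one, mul_zero]
  split_ifs with h h2
  · exact sum_single_pred _ (T i) _ (fun k => by
      simp only [Fin.ext_iff]; have := k.isLt; omega)
  · exact sum_single_pred _ (T i) _ (fun k => by
      simp only [Fin.ext_iff]; have := k.isLt; have := c.isLt; omega)
  · exact Finset.sum_eq_zero fun k _ => by rw [if_neg]; have := k.isLt; omega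

lemma mul_L2_apply {n m : ℕ} (T : Matrix (Fin n) (Fin (2*m+1)) ℂ) (i : Fin n) (c : Fin (2*m+1)) :
    (T * L2M m) i c =
      if h : 1 ≤ (c:ℕ) ∧ (c:ℕ) ≤ m then T i ⟨(c:ℕ) + m, by omega⟩
      else if h2 : m + 1 ≤ (c:ℕ) then T i ⟨(c:ℕ) - m, by have := c.isLt; omega⟩
      else 0 := by
  rw [Matrix.mul_apply]
  simp only [L2M_apply, mul_ite, mul_one, mul_zero]
  split_ifs with h h2
  · exact sum_single_pred _ (T i) _ (fun k => by
      simp only [Fin.ext_iff]; have := k.isLt; omega)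
  · exact sum_single_pred _ (T i) _ (fun k => by
      simp only [Fin.ext_iff]; have := k.isLt; have := c.isLt; omega)
  · exact Finset.sum_eq_zero fun k _ => by rw [if_neg]; have := k.isLt; omega
lemma lamM_zero_apply {n : ℕ} (i k : Fin n) :
    lamM n 0 i k = if (i:ℕ) + (k:ℕ) = n then 1 else 0 := by
  simp only [lamM, Matrix.of_apply]
  split_ifs <;> first | rfl | omega

lemma lamM_zero_mul {n N : ℕ} (S : Matrix (Fin n) (Fin N) ℂ) (i : Fin n) (c : Fin N) :
    (lamM n 0 * S) i c =
      if h : 1 ≤ (i:ℕ) then S ⟨n - (i:ℕ), by have := i.isLt; omega⟩ c else 0 := by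
  rw [Matrix.mul_apply]
  simp only [lamM_zero_apply, ite_mul, one_mul, zero_mul]
  split_ifs with h
  · exact sum_single_pred _ (fun k => S k c) _ (fun k => by
      simp only [Fin.ext_iff]; have := k.isLt; have := i.isLt; omega)
  · exact Finset.sum_eq_zero fun k _ => by rw [if_neg]; have := k.isLt; omega

lemma delM_mul {n N : ℕ} (S : Matrix (Fin n) (Fin N) ℂ) (i : Fin n) (c : Fin N) :
    (delM n * S) i c = S ⟨n - 1 - (i:ℕ), by have := i.isLt; omega⟩ c := by
  rw [Matrix.mul_apply]
  have : ∀ k : Fin n, delM n i k = if (i:ℕ) + (k:ℕ) = n - 1 then 1 else 0 := by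
    intro k
    simp only [delM, Matrix.of_apply]
    split_ifs <;> first | rfl | (exfalso; have := i.isLt; have := k.isLt; omega)
  simp only [this, ite_mul, one_mul, zero_mul]
  exact sum_single_pred _ (fun k => S k c) _ (fun k => by
    simp only [Fin.ext_iff]; have := k.isLt; have := i.isLt; omega)

lemma lam_del_mul {n N : ℕ} (M : Matrix (Fin n) (Fin N) ℂ) (i : Fin n) (c : Fin N) :
    (lamM n 0 * (delM n * M)) i c =
      if h : 1 ≤ (i:ℕ) then M ⟨(i:ℕ) - 1, by have := i.isLt; omega⟩ c else 0 := by
  rw [lamM_zero_mul]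
  split_ifs with h
  · rw [delM_mul]
    congr 1
    simp only [Fin.ext_iff]
    have := i.isLt; omega
  · rfl

lemma delM_mul_delM (n : ℕ) : delM n * delM n = 1 := by
  ext i j
  rw [delM_mul, Matrix.one_apply]
  simp only [delM, Matrix.of_apply]
  have := i.isLt; have := j.isLt
  split_ifs with h1 h2 h2 <;> first | rfl | (exfalso; simp only [Fin.ext_iff] at *; omega)
/-- Recursive construction of the matrix `T = Rᵀ` solving the off-diagonal equations. -/
noncomputable def tAux (n m : ℕ) (X Y : Matrix (Fin n) (Fin (2*m+1)) ℂ) :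
    ℕ → Fin (2*m+1) → ℂ
  | 0 => fun k =>
      if hn : 0 < n then
        if hk : (k:ℕ) < m then X ⟨0, hn⟩ ⟨(k:ℕ) + (m+1), by omega⟩
        else if hk2 : m < (k:ℕ) then X ⟨0, hn⟩ ⟨(k:ℕ) - (m+1), by have := k.isLt; omega⟩
        else 0
      else 0
  | (i+1) => fun k =>
      if hn : i + 1 < n then
        if hk : (k:ℕ) < m then
          X ⟨i+1, hn⟩ ⟨(k:ℕ) + (m+1), by omega⟩ - Y ⟨i, by omega⟩ ⟨(k:ℕ) + (m+1), by omega⟩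
            + tAux n m X Y i ⟨(k:ℕ) + 1, by omega⟩
        else if hk2 : m < (k:ℕ) then
          X ⟨i+1, hn⟩ ⟨(k:ℕ) - (m+1), by have := k.isLt; omega⟩
            - Y ⟨i, by omega⟩ ⟨(k:ℕ) - (m+1), by have := k.isLt; omega⟩
            + (if m + 2 ≤ (k:ℕ) then tAux n m X Y i ⟨(k:ℕ) - 1, by have := k.isLt; omega⟩ else 0)
        else 0
      else 0

noncomputable def tMat (n m : ℕ) (X Y : Matrix (Fin n) (Fin (2*m+1)) ℂ) :
    Matrix (Fin n) (Fin (2*m+1)) ℂ :=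
  Matrix.of fun i k => tAux n m X Y (i:ℕ) k

set_option maxHeartbeats 1000000 in
/-- The key identity satisfied by `tMat` off the middle column. -/
lemma tMat_key {n m : ℕ} (hm : 0 < m) (X Y : Matrix (Fin n) (Fin (2*m+1)) ℂ)
    (i : Fin n) (c : Fin (2*m+1)) (hc : (c:ℕ) ≠ m) :
    X i c = (tMat n m X Y * L1M m) i c +
      (if h : 1 ≤ (i:ℕ) then (Y - tMat n m X Y * L2M m) ⟨(i:ℕ) - 1, by have := i.isLt; omega⟩ c
       else 0) := by
  have hcl := c.isLt
  rw [mul_L1_apply]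
  rcases i with ⟨i, hi⟩
  rcases Nat.lt_or_ge (c:ℕ) m with h | h
  · -- c < m : left block
    rw [dif_pos h]
    cases i with
    | zero =>
      simp only [Fin.val_mk, dif_neg (by omega : ¬ (1:ℕ) ≤ 0), add_zero]
      show X _ _ = tAux n m X Y 0 _
      simp only [tAux, dif_pos (by omega : 0 < n), Fin.val_mk]
      rw [dif_neg (by omega : ¬ (c:ℕ) + (m+1) < m), dif_pos (by omega : m < (c:ℕ) + (m+1))]
      have eX : (⟨(c:ℕ) + (m+1) - (m+1), by omega⟩ : Fin (2*m+1)) = c := Fin.ext (by simp)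
      rw [eX]
    | succ j =>
      rw [dif_pos (by exact Nat.le_add_left 1 j : 1 ≤ ((⟨j+1, hi⟩ : Fin n) : ℕ))]
      show X _ _ = tAux n m X Y (j+1) _ + ((Y - tMat n m X Y * L2M m) _ _)
      simp only [tAux, dif_pos hi, Fin.val_mk]
      rw [dif_neg (by omega : ¬ (c:ℕ) + (m+1) < m), dif_pos (by omega : m < (c:ℕ) + (m+1))]
      rw [Matrix.sub_apply, mul_L2_apply]
      have eX : (⟨(c:ℕ) + (m+1) - (m+1), by omega⟩ : Fin (2*m+1)) = c := Fin.ext (by simp)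
      rw [eX]
      have eY : (⟨j + 1 - 1, by omega⟩ : Fin n) = (⟨j, by omega⟩ : Fin n) := Fin.ext (by simp)
      rw [eY]
      rcases Nat.eq_zero_or_pos (c:ℕ) with h0 | h0
      · rw [if_neg (by omega : ¬ m + 2 ≤ (c:ℕ) + (m+1)), dif_neg (by omega), dif_neg (by omega)]
        ring
      · rw [if_pos (by omega : m + 2 ≤ (c:ℕ) + (m+1)),
            dif_pos (show 1 ≤ (c:ℕ) ∧ (c:ℕ) ≤ m by omega)]
        have eT : (⟨(c:ℕ) + (m+1) - 1, by omega⟩ : Fin (2*m+1))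
            = (⟨(c:ℕ) + m, by omega⟩ : Fin (2*m+1)) := by
          apply Fin.ext; show (c:ℕ) + (m+1) - 1 = (c:ℕ) + m; omega
        simp only [eT]
        have eM : tMat n m X Y (⟨j, by omega⟩ : Fin n) (⟨(c:ℕ) + m, by omega⟩ : Fin (2*m+1))
            = tAux n m X Y j (⟨(c:ℕ) + m, by omega⟩ : Fin (2*m+1)) := rfl
        linear_combination eM
  · -- c > m : right block
    have h' : m < (c:ℕ) := lt_of_le_of_ne h (Ne.symm hc)
    rw [dif_neg (by omega), dif_pos h']
    cases i with
    | zero =>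
      simp only [Fin.val_mk, dif_neg (by omega : ¬ (1:ℕ) ≤ 0), add_zero]
      show X _ _ = tAux n m X Y 0 _
      simp only [tAux, dif_pos (by omega : 0 < n), Fin.val_mk]
      rw [dif_pos (by omega : (c:ℕ) - (m+1) < m)]
      have eX : (⟨(c:ℕ) - (m+1) + (m+1), by omega⟩ : Fin (2*m+1)) = c := by
        apply Fin.ext; show (c:ℕ) - (m+1) + (m+1) = (c:ℕ); omega
      rw [eX]
    | succ j =>
      rw [dif_pos (by exact Nat.le_add_left 1 j : 1 ≤ ((⟨j+1, hi⟩ : Fin n) : ℕ))]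
      show X _ _ = tAux n m X Y (j+1) _ + ((Y - tMat n m X Y * L2M m) _ _)
      simp only [tAux, dif_pos hi, Fin.val_mk]
      rw [dif_pos (by omega : (c:ℕ) - (m+1) < m)]
      rw [Matrix.sub_apply, mul_L2_apply]
      rw [dif_neg (by omega), dif_pos (by omega : m + 1 ≤ (c:ℕ))]
      have eX : (⟨(c:ℕ) - (m+1) + (m+1), by omega⟩ : Fin (2*m+1)) = c := by
        apply Fin.ext; show (c:ℕ) - (m+1) + (m+1) = (c:ℕ); omega
      rw [eX]
      have eY : (⟨j + 1 - 1, by omega⟩ : Fin n) = (⟨j, by omega⟩ : Fin n) := Fin.ext (by simp)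
      rw [eY]
      have eT : (⟨(c:ℕ) - (m+1) + 1, by omega⟩ : Fin (2*m+1))
          = (⟨(c:ℕ) - m, by omega⟩ : Fin (2*m+1)) := by
        apply Fin.ext; show (c:ℕ) - (m+1) + 1 = (c:ℕ) - m; omega
      simp only [eT]
      have eM : tMat n m X Y (⟨j, by omega⟩ : Fin n) (⟨(c:ℕ) - m, by omega⟩ : Fin (2*m+1))
          = tAux n m X Y j (⟨(c:ℕ) - m, by omega⟩ : Fin (2*m+1)) := rfl
      linear_combination eM
lemma offMap_apply {ι κ : Type} [Fintype ι] [Fintype κ] (Ai Bi : Matrix ι ι ℂ)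
    (Aj Bj : Matrix κ κ ℂ) (S : Matrix ι κ ℂ) (R : Matrix κ ι ℂ) :
    offMap Ai Bi Aj Bj (S, R) = (Rᵀ * Aj + Ai * S, Rᵀ * Bj + Bi * S) := rfl

lemma mem_entryPattern {ι κ : Type} (S1 S2 : Set (ι × κ))
    (x : Matrix ι κ ℂ × Matrix ι κ ℂ) :
    x ∈ entryPattern S1 S2 ↔
      (∀ i j, (i, j) ∉ S1 → x.1 i j = 0) ∧ (∀ i j, (i, j) ∉ S2 → x.2 i j = 0) := Iff.rfl

theorem K_L_offdiagonal' (n m : ℕ) (hn : 0 < n) (hm : 0 < m) :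
    Disjoint (WSpace (lamM n 0) (delM n) (L1M m) (L2M m))
      (entryPattern
        {pq : Fin n × Fin (2 * m + 1) | (pq.2 : ℕ) = m}
        (∅ : Set (Fin n × Fin (2 * m + 1)))) ∧
    WSpace (lamM n 0) (delM n) (L1M m) (L2M m) ⊔
      entryPattern
        {pq : Fin n × Fin (2 * m + 1) | (pq.2 : ℕ) = m}
        (∅ : Set (Fin n × Fin (2 * m + 1))) = ⊤ := by
  constructor
  · -- Disjointness
    rw [Submodule.disjoint_def]
    rintro x hxW hxP
    obtain ⟨⟨S, R⟩, rfl⟩ := hxW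
    rw [mem_entryPattern, offMap_apply] at hxP
    simp only [Prod.fst, Prod.snd] at hxP
    obtain ⟨hx1, hx2'⟩ := hxP
    rw [offMap_apply]
    -- the second component is zero
    have hx2 : Rᵀ * L2M m + delM n * S = 0 := by
      ext i j
      simpa using hx2' i j (by simp)
    have hDS : ∀ (i : Fin n) (c : Fin (2*m+1)),
        (delM n * S) i c = -((Rᵀ * L2M m) i c) := by
      intro i c
      have h := congrFun (congrFun hx2 i) c
      simp only [Matrix.add_apply, Matrix.zero_apply] at h
      linear_combination h
    -- rewrite lamM * S
    have hS2 : S = delM n * (delM n * S) := by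
      rw [← Matrix.mul_assoc, delM_mul_delM, Matrix.one_mul]
    have hlamS : ∀ (i : Fin n) (c : Fin (2*m+1)),
        (lamM n 0 * S) i c =
          if h : 1 ≤ (i:ℕ) then
            -((Rᵀ * L2M m) ⟨(i:ℕ) - 1, by have := i.isLt; omega⟩ c) else 0 := by
      intro i c
      conv_lhs => rw [hS2]
      rw [lam_del_mul]
      split_ifs with h
      · exact hDS _ _
      · rfl
    -- entries of the first component
    have hfirst : ∀ (i : Fin n) (c : Fin (2*m+1)),
        (Rᵀ * L1M m + lamM n 0 * S) i c =
          (Rᵀ * L1M m) i c -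
            (if h : 1 ≤ (i:ℕ) then
              (Rᵀ * L2M m) ⟨(i:ℕ) - 1, by have := i.isLt; omega⟩ c else 0) := by
      intro i c
      rw [Matrix.add_apply, hlamS]
      split_ifs <;> ring
    -- key vanishing claim for the upper columns of Rᵀ
    have hT : ∀ (J : ℕ) (j : Fin n), (j:ℕ) ≤ J → ∀ k : Fin (2*m+1),
        m + 1 ≤ (k:ℕ) → Rᵀ j k = 0 := by
      intro J
      induction J with
      | zero =>
        intro j hj k hk
        have hkl := k.isLt
        set c : Fin (2*m+1) := ⟨(k:ℕ) - (m+1), by omega⟩ with hcdef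
        have hcval : (c:ℕ) = (k:ℕ) - (m+1) := rfl
        have h0 := hx1 j c (by simp only [Set.mem_setOf_eq]; omega)
        rw [hfirst, mul_L1_apply] at h0
        rw [dif_pos (show (c:ℕ) < m by omega),
          dif_neg (by omega : ¬ 1 ≤ (j:ℕ))] at h0
        have ek : (⟨(c:ℕ) + (m+1), by omega⟩ : Fin (2*m+1)) = k := by
          apply Fin.ext; show (c:ℕ) + (m+1) = (k:ℕ); omega
        rw [ek] at h0
        linear_combination h0
      | succ J ih =>
        intro j hj k hk
        have hkl := k.isLt
        have hjl := j.isLt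
        set c : Fin (2*m+1) := ⟨(k:ℕ) - (m+1), by omega⟩ with hcdef
        have hcval : (c:ℕ) = (k:ℕ) - (m+1) := rfl
        have h0 := hx1 j c (by simp only [Set.mem_setOf_eq]; omega)
        rw [hfirst, mul_L1_apply] at h0
        rw [dif_pos (show (c:ℕ) < m by omega)] at h0
        have ek : (⟨(c:ℕ) + (m+1), by omega⟩ : Fin (2*m+1)) = k := by
          apply Fin.ext; show (c:ℕ) + (m+1) = (k:ℕ); omega
        rw [ek] at h0
        rcases Nat.eq_zero_or_pos (j:ℕ) with hj0 | hj0
        · rw [dif_neg (by omega : ¬ 1 ≤ (j:ℕ))] at h0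
          linear_combination h0
        · rw [dif_pos (show 1 ≤ (j:ℕ) by omega), mul_L2_apply] at h0
          rcases Nat.eq_zero_or_pos (c:ℕ) with hc0 | hc0
          · rw [dif_neg (by omega), dif_neg (by omega)] at h0
            linear_combination h0
          · rw [dif_pos (show 1 ≤ (c:ℕ) ∧ (c:ℕ) ≤ m by omega)] at h0
            have hz : Rᵀ (⟨(j:ℕ) - 1, by omega⟩ : Fin n)
                (⟨(c:ℕ) + m, by omega⟩ : Fin (2*m+1)) = 0 := by
              apply ih ⟨(j:ℕ) - 1, by omega⟩ (by show (j:ℕ) - 1 ≤ J; omega)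
              show m + 1 ≤ (c:ℕ) + m; omega
            rw [hz] at h0
            linear_combination h0
    -- conclude x = 0
    refine Prod.ext ?_ hx2
    ext i c
    show (Rᵀ * L1M m + lamM n 0 * S) i c = 0
    rcases eq_or_ne ((c:ℕ)) m with hcm | hcm
    · rw [hfirst, mul_L1_apply, dif_neg (by omega), dif_neg (by omega)]
      split_ifs with h
      · rw [mul_L2_apply, dif_pos (by omega : 1 ≤ (c:ℕ) ∧ (c:ℕ) ≤ m)]
        rw [hT ((i:ℕ) - 1) _ le_rfl _ (by show m + 1 ≤ (c:ℕ) + m; omega)]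
        ring
      · ring
    · exact hx1 i c (by simpa using hcm)
  · -- Spanning
    rw [eq_top_iff]
    rintro ⟨X, Y⟩ -
    rw [Submodule.mem_sup]
    set T := tMat n m X Y with hTdef
    set w : Matrix (Fin n) (Fin (2*m+1)) ℂ × Matrix (Fin n) (Fin (2*m+1)) ℂ :=
      offMap (lamM n 0) (delM n) (L1M m) (L2M m) (delM n * (Y - T * L2M m), Tᵀ) with hwdef
    refine ⟨w, ⟨(delM n * (Y - T * L2M m), Tᵀ), rfl⟩, (X, Y) - w, ?_, by abel⟩
    have hw : w = (T * L1M m + lamM n 0 * (delM n * (Y - T * L2M m)), Y) := by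
      rw [hwdef, offMap_apply, Matrix.transpose_transpose]
      congr 1
      rw [← Matrix.mul_assoc, delM_mul_delM, Matrix.one_mul]
      abel
    rw [mem_entryPattern, hw]
    constructor
    · intro i c hc
      have hc' : (c:ℕ) ≠ m := by simpa using hc
      show X i c - (T * L1M m + lamM n 0 * (delM n * (Y - T * L2M m))) i c = 0
      rw [Matrix.add_apply]
      have hkey := tMat_key hm X Y i c hc'
      rw [← hTdef] at hkey
      rw [lam_del_mul]
      linear_combination hkey
    · intro i c _
      show Y i c - Y i c = 0
      ring

/-- **Off-diagonal blocks `K_n` vs `L_m`.** With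
`W = {(Rᵀ L_m^{(1)} + Λ_n(0) S, Rᵀ L_m^{(2)} + Δ_n S)}` and `P` the pairs `(X, 0)` with
`X` supported on the `(m+1)`-st column, one has
`ℂ^{n×(2m+1)} × ℂ^{n×(2m+1)} = W ⊕ P`. -/
theorem K_L_offdiagonal (n m : ℕ) (hn : 0 < n) (hm : 0 < m) :
    Disjoint (WSpace (lamM n 0) (delM n) (L1M m) (L2M m))
      (entryPattern
        {pq : Fin n × Fin (2 * m + 1) | (pq.2 : ℕ) = m}
        (∅ : Set (Fin n × Fin (2 * m + 1)))) ∧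
    WSpace (lamM n 0) (delM n) (L1M m) (L2M m) ⊔
      entryPattern
        {pq : Fin n × Fin (2 * m + 1) | (pq.2 : ℕ) = m}
        (∅ : Set (Fin n × Fin (2 * m + 1))) = ⊤ := by
  exact K_L_offdiagonal' n m hn hm

end
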